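/- For every integer N ≥ 1, the following identity of polynomials in q holds: ∑_{n=1}^{N} ∑_{m=0}^{N−n} (−1)^{N−n−m} q^{E(n,m,N)} [N choose n+m]_q = (−1)^{N+1} q^{binom(N+2,2)} ∏_{j=2}^{N}(1 − q^{j}), where E(n,m,N) = n + (m+n)(n+1) + binom(N−n−m+1, 2) + (N−n−m)·n, and binom(a,2) = a(a−1)/2. -/

import Mathlib

open Polynomial

set_option synthInstance.maxHeartbeats 1000000
set_option maxHeartbeats 1000000

/-- The q-Pochhammer symbol `(q;q)_n = ∏_{j=0}^{n-1} (1 - q^{j+1})` as a polynomial in `ℤ[q]`. -/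
noncomputable def qPoch (n : ℕ) : Polynomial ℤ :=
  ∏ j ∈ Finset.range n, (1 - X ^ (j + 1))

/-- The Gaussian (q-)binomial coefficient `[A choose B]_q`, viewed in the fraction field
of `ℤ[q]`: it equals `(q;q)_A / ((q;q)_B (q;q)_{A-B})` for `B ≤ A`, and `0` otherwise. -/
noncomputable def qBinom (A B : ℕ) : FractionRing (Polynomial ℤ) :=
  if B ≤ A then
    algebraMap (Polynomial ℤ) (FractionRing (Polynomial ℤ)) (qPoch A) /
      (algebraMap (Polynomial ℤ) (FractionRing (Polynomial ℤ)) (qPoch B) *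
        algebraMap (Polynomial ℤ) (FractionRing (Polynomial ℤ)) (qPoch (A - B)))
  else 0

/-- The exponent `E(n,m,N) = n + (m+n)(n+1) + binom(N−n−m+1,2) + (N−n−m)·n`. -/
def Eexp (n m N : ℕ) : ℕ :=
  n + (m + n) * (n + 1) + (N - n - m + 1).choose 2 + (N - n - m) * n

noncomputable abbrev FF := FractionRing (Polynomial ℤ)

noncomputable def qq : FF := algebraMap (Polynomial ℤ) FF X

noncomputable def PP (n : ℕ) : FF := algebraMap (Polynomial ℤ) FF (qPoch n)

lemma qq_def : qq = algebraMap (Polynomial ℤ) (FractionRing (Polynomial ℤ)) X := rfl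

lemma one_sub_pow_ne (j : ℕ) : (1 - X ^ (j+1) : Polynomial ℤ) ≠ 0 := by
  intro h
  have := congrArg (fun p => Polynomial.coeff p (j+1)) h
  simp [Polynomial.coeff_one, Nat.succ_ne_zero] at this

lemma qPoch_ne_zero (n : ℕ) : qPoch n ≠ 0 :=
  Finset.prod_ne_zero_iff.mpr fun j _ => one_sub_pow_ne j

lemma PP_ne_zero (n : ℕ) : PP n ≠ 0 := by
  have : Function.Injective (algebraMap (Polynomial ℤ) FF) := IsFractionRing.injective _ _
  simpa [PP, map_ne_zero_iff _ this] using qPoch_ne_zero n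

lemma PP_zero : PP 0 = 1 := by simp [PP, qPoch]

lemma PP_succ (n : ℕ) : PP (n+1) = PP n * (1 - qq^(n+1)) := by
  simp [PP, qPoch, Finset.prod_range_succ, qq, map_mul, map_sub, map_pow]

lemma one_sub_qq_ne (j : ℕ) : (1 - qq^(j+1) : FF) ≠ 0 := by
  have : Function.Injective (algebraMap (Polynomial ℤ) FF) := IsFractionRing.injective _ _
  have h := one_sub_pow_ne j
  intro hc
  apply h; apply this
  simpa [qq, map_sub, map_pow] using hc

lemma qq_ne : (qq : FF) ≠ 0 := by
  have : Function.Injective (algebraMap (Polynomial ℤ) FF) := IsFractionRing.injective _ _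
  simpa [qq, map_ne_zero_iff _ this] using (Polynomial.X_ne_zero : (X : Polynomial ℤ) ≠ 0)

lemma qBinom_eq (A B : ℕ) (h : B ≤ A) : qBinom A B = PP A / (PP B * PP (A - B)) := by
  rw [qBinom, if_pos h]; rfl

lemma qBinom_of_gt {A B : ℕ} (h : A < B) : qBinom A B = 0 := by
  rw [qBinom, if_neg (by omega)]

lemma qBinom_self (A : ℕ) : qBinom A A = 1 := by
  rw [qBinom_eq A A le_rfl, Nat.sub_self, PP_zero, mul_one, div_self (PP_ne_zero A)]

lemma qBinom_zero (A : ℕ) : qBinom A 0 = 1 := by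
  rw [qBinom_eq A 0 (Nat.zero_le _), Nat.sub_zero, PP_zero, one_mul, div_self (PP_ne_zero A)]

lemma qBinom_symm (A B : ℕ) (h : B ≤ A) : qBinom A B = qBinom A (A - B) := by
  rw [qBinom_eq A B h, qBinom_eq A (A-B) (Nat.sub_le _ _), Nat.sub_sub_self h, mul_comm]

lemma pascal (M i : ℕ) :
    qBinom (M+1) (i+1) = qq^(i+1) * qBinom M (i+1) + qBinom M i := by
  rcases lt_trichotomy i M with h | rfl | h
  · obtain ⟨k, rfl⟩ : ∃ k, M = i + 1 + k := ⟨M - i - 1, by omega⟩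
    rw [qBinom_eq (i+1+k+1) (i+1) (by omega), qBinom_eq (i+1+k) (i+1) (by omega),
      qBinom_eq (i+1+k) i (by omega)]
    have e1 : i + 1 + k + 1 - (i+1) = k + 1 := by omega
    have e2 : i + 1 + k - (i+1) = k := by omega
    have e3 : i + 1 + k - i = k + 1 := by omega
    rw [e1, e2, e3]
    rw [show i+1+k+1 = (i+k+1)+1 by omega, PP_succ (i+k+1), PP_succ k, PP_succ i]
    have h1 := PP_ne_zero i
    have h2 := PP_ne_zero k
    have h3 := one_sub_qq_ne i
    have h4 := one_sub_qq_ne k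
    field_simp
    ring
  · rw [qBinom_self, qBinom_of_gt (by omega), qBinom_self]; ring
  · rw [qBinom_of_gt (by omega), qBinom_of_gt (by omega), qBinom_of_gt (by omega)]; ring

lemma choose_two_succ (j : ℕ) : (j+1).choose 2 = j.choose 2 + j := by
  rw [Nat.choose_succ_succ, Nat.choose_one_right, Nat.add_comm]

lemma qbt : ∀ (M : ℕ) (z : FF),
    ∑ j ∈ Finset.range (M+1), (-1:FF)^j * qq^(j.choose 2) * z^j * qBinom M j
      = ∏ t ∈ Finset.range M, (1 - z * qq^t) := by
  intro M
  induction M with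
  | zero => intro z; simp [qBinom_self]
  | succ M ih =>
    intro z
    rw [Finset.sum_range_succ']
    have hstep : ∀ j ∈ Finset.range (M+1),
        (-1:FF)^(j+1) * qq^((j+1).choose 2) * z^(j+1) * qBinom (M+1) (j+1)
        = (-1:FF)^(j+1) * qq^((j+1).choose 2) * (z*qq)^(j+1) * qBinom M (j+1)
          + (-z) * ((-1:FF)^j * qq^(j.choose 2) * (z*qq)^j * qBinom M j) := by
      intro j hj
      rw [pascal M j]
      rw [choose_two_succ j]
      ring
    rw [Finset.sum_congr rfl hstep, Finset.sum_add_distrib, ← Finset.mul_sum, ih (z*qq)]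
    have hshift : ∑ j ∈ Finset.range (M+1),
        (-1:FF)^(j+1) * qq^((j+1).choose 2) * (z*qq)^(j+1) * qBinom M (j+1)
        = (∏ t ∈ Finset.range M, (1 - (z*qq) * qq^t)) - 1 := by
      have h2 : ∑ j ∈ Finset.range (M+2),
          (-1:FF)^j * qq^(j.choose 2) * (z*qq)^j * qBinom M j
          = ∑ j ∈ Finset.range (M+1),
              (-1:FF)^(j+1) * qq^((j+1).choose 2) * (z*qq)^(j+1) * qBinom M (j+1)
            + 1 := by
        rw [Finset.sum_range_succ']
        simp [qBinom_zero]
      have h3 : ∑ j ∈ Finset.range (M+2),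
          (-1:FF)^j * qq^(j.choose 2) * (z*qq)^j * qBinom M j
          = ∏ t ∈ Finset.range M, (1 - (z*qq) * qq^t) := by
        rw [Finset.sum_range_succ, qBinom_of_gt (by omega), ih (z*qq)]
        ring
      rw [h3] at h2
      linear_combination -h2
    rw [hshift]
    simp only [qBinom_zero, pow_zero, mul_one, Nat.choose_eq_zero_of_lt (by norm_num : 0 < 2)]
    rw [Finset.prod_range_succ']
    have : ∀ t ∈ Finset.range M, (1 - z * qq^(t+1)) = (1 - (z*qq)*qq^t) := by
      intro t ht; ring
    rw [Finset.prod_congr rfl this]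
    ring

lemma psum (N : ℕ) (hN : 1 ≤ N) : ∀ m : ℕ,
    ∑ j ∈ Finset.range (m+1), (-1:FF)^j * qq^(j.choose 2) * qBinom N j
      = (-1:FF)^m * qq^((m+1).choose 2) * qBinom (N-1) m := by
  intro m
  induction m with
  | zero => simp [qBinom_zero]
  | succ m ih =>
    have hP := pascal (N-1) m
    rw [Nat.sub_add_cancel hN] at hP
    rw [Finset.sum_range_succ, ih, hP, choose_two_succ (m+1), pow_add,
      choose_two_succ m, pow_add]
    ring

lemma innerSumStep (N n : ℕ) (hn1 : 1 ≤ n) (hnN : n ≤ N) :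
    ∑ m ∈ Finset.range (N - n + 1),
      (-1:FF)^(N-n-m) * qq^(Eexp n m N) * qBinom N (n+m)
    = qq^(n*(N+1)+N) *
        ((-1:FF)^(N-n) * qq^((N-n+1).choose 2) * qBinom (N-1) (N-n)) := by
  have hN : 1 ≤ N := le_trans hn1 hnN
  rw [← psum N hN (N-n), Finset.mul_sum,
    ← Finset.sum_range_reflect (fun m => (-1:FF)^(N-n-m) * qq^(Eexp n m N) * qBinom N (n+m))]
  refine Finset.sum_congr rfl ?_
  intro j hj
  rw [Finset.mem_range] at hj
  have hjle : j ≤ N - n := by omega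
  obtain ⟨d, rfl⟩ : ∃ d, N = n + j + d := ⟨N - n - j, by omega⟩
  have e1 : n + j + d - n + 1 - 1 - j = d := by omega
  rw [e1]
  have e2 : n + j + d - n - d = j := by omega
  rw [e2]
  have hsym : qBinom (n+j+d) (n+d) = qBinom (n+j+d) j := by
    rw [qBinom_symm (n+j+d) j (by omega)]
    congr 1
    omega
  have hE : Eexp n d (n+j+d) = (n*((n+j+d)+1)+(n+j+d)) + j.choose 2 := by
    simp only [Eexp]
    rw [show n + j + d - n - d = j from by omega, choose_two_succ]
    ring
  rw [hsym, hE, pow_add]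
  ring

lemma sum_range_id_choose (n : ℕ) : ∑ i ∈ Finset.range n, i = n.choose 2 := by
  induction n with
  | zero => simp
  | succ n ih => rw [Finset.sum_range_succ, ih, choose_two_succ]

lemma outerStep (N : ℕ) (hN : 1 ≤ N) :
    ∑ n ∈ Finset.Icc 1 N, qq^(n*(N+1)+N) *
        ((-1:FF)^(N-n) * qq^((N-n+1).choose 2) * qBinom (N-1) (N-n))
    = qq^(N*N+2*N) * ∑ j ∈ Finset.range N,
        (-1:FF)^j * qq^(j.choose 2) * ((qq^N)⁻¹)^j * qBinom (N-1) j := by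
  rw [Finset.mul_sum, ← Finset.Ico_add_one_right_eq_Icc, Finset.sum_Ico_eq_sum_range]
  rw [show N + 1 - 1 = N from rfl]
  rw [← Finset.sum_range_reflect]
  refine Finset.sum_congr rfl ?_
  intro j hj
  rw [Finset.mem_range] at hj
  obtain ⟨d, rfl⟩ : ∃ d, N = j + 1 + d := ⟨N - j - 1, by omega⟩
  rw [show j + 1 + d - 1 - j = d from by omega]
  rw [show j + 1 + d - (1 + d) = j from by omega,
      show j + 1 + d - 1 = j + d from by omega]
  rw [inv_pow, ← pow_mul]
  have hq' : (qq^((j+1+d)*j) : FF) ≠ 0 := pow_ne_zero _ qq_ne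
  have key : qq^((j+1+d)*(j+1+d)+2*(j+1+d)) * qq^(j.choose 2)
      = qq^((1+d)*(j+1+d+1)+(j+1+d)) * qq^((j+1).choose 2) * qq^((j+1+d)*j) := by
    rw [← pow_add, ← pow_add, ← pow_add]
    congr 1
    rw [choose_two_succ]
    ring
  field_simp
  linear_combination (-(qBinom (j+d) j)) * key

lemma finalStep (N : ℕ) (hN : 1 ≤ N) :
    qq^(N*N+2*N) * ∏ t ∈ Finset.range (N-1), (1 - (qq^N)⁻¹ * qq^t)
    = (-1:FF)^(N+1) * (qq^((N+2).choose 2) * ∏ j ∈ Finset.Icc 2 N, (1 - qq^j)) := by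
  obtain ⟨M, rfl⟩ : ∃ M, N = M + 1 := ⟨N - 1, by omega⟩
  simp only [Nat.add_sub_cancel]
  have h1 : ∀ t ∈ Finset.range M,
      (1 - (qq^(M+1))⁻¹ * qq^t : FF)
        = (qq^(M+1))⁻¹ * (qq^t * ((-1) * (1 - qq^(M-1-t+2)))) := by
    intro t ht
    rw [Finset.mem_range] at ht
    have hpow : (qq:FF)^t * qq^(M-1-t+2) = qq^(M+1) := by
      rw [← pow_add]; congr 1; omega
    have hne : (qq^(M+1) : FF) ≠ 0 := pow_ne_zero _ qq_ne
    field_simp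
    linear_combination -hpow
  rw [Finset.prod_congr rfl h1, Finset.prod_mul_distrib, Finset.prod_mul_distrib,
    Finset.prod_const, Finset.prod_mul_distrib, Finset.prod_const,
    Finset.prod_pow_eq_pow_sum, sum_range_id_choose]
  have h2 : ∏ t ∈ Finset.range M, (1 - qq^(M-1-t+2) : FF)
      = ∏ t ∈ Finset.range M, (1 - qq^(t+2) : FF) :=
    Finset.prod_range_reflect (fun t => (1 - qq^(t+2) : FF)) M
  have h3 : ∏ j ∈ Finset.Icc 2 (M+1), (1 - qq^j : FF)
      = ∏ t ∈ Finset.range M, (1 - qq^(t+2) : FF) := by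
    rw [← Finset.Ico_add_one_right_eq_Icc, Finset.prod_Ico_eq_prod_range]
    simp only [show M + 1 + 1 - 2 = M from by omega]
    refine Finset.prod_congr rfl ?_
    intro t ht
    rw [Nat.add_comm 2 t]
  rw [h2, h3, inv_pow, ← pow_mul]
  have hsign : ((-1:FF))^(M+1+1) = (-1:FF)^M := by
    rw [pow_succ, pow_succ]; ring
  rw [hsign]
  have hq' : (qq^((M+1)*M) : FF) ≠ 0 := pow_ne_zero _ qq_ne
  have key : qq^((M+1)*(M+1)+2*(M+1)) * qq^(M.choose 2)
      = qq^((M+1+2).choose 2) * qq^((M+1)*M) := by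
    rw [← pow_add, ← pow_add]
    congr 1
    rw [show M+1+2 = (M+2)+1 from rfl, choose_two_succ (M+2),
      show M+2 = (M+1)+1 from rfl, choose_two_succ (M+1), choose_two_succ M]
    ring
  rw [Finset.card_range]
  field_simp
  linear_combination (∏ t ∈ Finset.range M, (1 - qq^(t+2) : FF)) * key

/-- `∑_{n=1}^{N} ∑_{m=0}^{N−n} (−1)^{N−n−m} q^{E(n,m,N)} [N choose n+m]_q
      = (−1)^{N+1} q^{binom(N+2,2)} ∏_{j=2}^{N} (1 − q^j)`. -/
theorem double_sum_identity (N : ℕ) (hN : 1 ≤ N) :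
    ∑ n ∈ Finset.Icc 1 N, ∑ m ∈ Finset.range (N - n + 1),
      (-1 : FractionRing (Polynomial ℤ)) ^ (N - n - m) *
        algebraMap (Polynomial ℤ) (FractionRing (Polynomial ℤ)) (X ^ Eexp n m N) *
        qBinom N (n + m) =
    (-1 : FractionRing (Polynomial ℤ)) ^ (N + 1) *
      algebraMap (Polynomial ℤ) (FractionRing (Polynomial ℤ))
        (X ^ ((N + 2).choose 2) * ∏ j ∈ Finset.Icc 2 N, (1 - X ^ j)) := by
  simp only [map_mul, map_pow, map_prod, map_sub, map_one, ← qq_def]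
  have hinner : ∀ n ∈ Finset.Icc 1 N,
      ∑ m ∈ Finset.range (N - n + 1),
        (-1:FF)^(N-n-m) * qq^(Eexp n m N) * qBinom N (n+m)
      = qq^(n*(N+1)+N) *
          ((-1:FF)^(N-n) * qq^((N-n+1).choose 2) * qBinom (N-1) (N-n)) := by
    intro n hn
    rw [Finset.mem_Icc] at hn
    exact innerSumStep N n hn.1 hn.2
  rw [Finset.sum_congr rfl hinner, outerStep N hN]
  have hqbt := qbt (N-1) ((qq^N)⁻¹)
  rw [Nat.sub_add_cancel hN] at hqbt
  rw [hqbt, finalStep N hN]
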